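/- Let K be a field of characteristic 0 and let F(z) = ∑_{n≥1} f(n) z^n ∈ K[[z]] be D-finite over K(z). Then there exist a finitely generated ℚ-subalgebra R of K and a nonzero polynomial p ∈ R[x] with p(1), p(2), p(3), … all nonzero, such that for every n ≥ 1 the coefficient f(n) lies in the subring of K generated by R together with the inverses p(k)^{-1} for k ≥ 1. Moreover, if F is algebraic over K(z), then there exists a finitely generated ℚ-subalgebra T of K such that f(n) ∈ T for all n ≥ 1. -/

import Mathlib

open Polynomial PowerSeries Finset

lemma coeff_iter_deriv {K : Type*} [CommRing K] :
    ∀ (i : ℕ) (φ : PowerSeries K) (m : ℕ),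
      PowerSeries.coeff m ((⇑(PowerSeries.derivative (R := K)))^[i] φ) =
      PowerSeries.coeff (m + i) φ * ∏ l ∈ Finset.range i, ((m + l + 1 : ℕ) : K) := by
  intro i
  induction i with
  | zero => simp
  | succ i IH =>
    intro φ m
    rw [Function.iterate_succ_apply, IH, PowerSeries.coeff_derivative,
      Finset.prod_range_succ]
    push_cast
    rw [show m + (i + 1) = m + i + 1 by omega]
    ring

section
variable {K : Type*} [Field K] [CharZero K]

noncomputable def Qpoly (p : ℕ → Polynomial K) (s D t : ℕ) : Polynomial K :=
  ∑ i ∈ Finset.range (s+1),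
    if i ≤ t ∧ t ≤ i + (D-1) then
      Polynomial.C ((p i).coeff (i + (D-1) - t)) *
        ∏ l ∈ Finset.range i, (Polynomial.X + Polynomial.C ((t - i + 1 + l : ℕ) : K))
    else 0

omit [CharZero K] in
lemma Qpoly_eval (p : ℕ → Polynomial K) (s D t : ℕ) (x : K) :
    (Qpoly p s D t).eval x =
    ∑ i ∈ Finset.range (s+1),
      if i ≤ t ∧ t ≤ i + (D-1) then
        ((p i).coeff (i + (D-1) - t)) * ∏ l ∈ Finset.range i, (x + ((t - i + 1 + l : ℕ) : K))
      else 0 := by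
  rw [Qpoly, Polynomial.eval_finset_sum]
  refine Finset.sum_congr rfl fun i _ => ?_
  split
  · rw [Polynomial.eval_mul, Polynomial.eval_C, Polynomial.eval_prod]
    simp
  · simp

omit [CharZero K] in
lemma key_recurrence (g : ℕ → K) (s : ℕ) (p : ℕ → Polynomial K)
    (D : ℕ) (hD : 1 ≤ D) (hDdeg : ∀ i, i ≤ s → (p i).natDegree < D)
    (heq : ∑ i ∈ Finset.range (s + 1), (p i : PowerSeries K) *
        (⇑(PowerSeries.derivative (R := K)))^[i] (PowerSeries.mk g) = 0) :
    ∀ b : ℕ, ∑ t ∈ Finset.range (s + D), (Qpoly p s D t).eval ((b : K)) * g (b + t) = 0 := by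
  intro b
  set m := b + (D - 1) with hm
  have h0 : PowerSeries.coeff m (∑ i ∈ Finset.range (s + 1), (p i : PowerSeries K) *
      (⇑(PowerSeries.derivative (R := K)))^[i] (PowerSeries.mk g)) = 0 := by
    rw [heq]; simp
  rw [map_sum] at h0
  have h1 : ∀ i ∈ Finset.range (s+1),
      PowerSeries.coeff m ((p i : PowerSeries K) *
        (⇑(PowerSeries.derivative (R := K)))^[i] (PowerSeries.mk g)) =
      ∑ j ∈ Finset.range D,
        (p i).coeff j * (g (m - j + i) * ∏ l ∈ Finset.range i, ((m - j + l + 1 : ℕ) : K)) := by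
    intro i hi
    rw [PowerSeries.coeff_mul, Finset.Nat.sum_antidiagonal_eq_sum_range_succ_mk]
    rw [Finset.sum_subset (Finset.range_subset_range.2 (by omega : D ≤ m + 1))]
    · refine Finset.sum_congr rfl fun j hj => ?_
      rw [Polynomial.coeff_coe, coeff_iter_deriv, PowerSeries.coeff_mk]
    · intro j hjm hjD
      have hc : (p i).coeff j = 0 := by
        refine Polynomial.coeff_eq_zero_of_natDegree_lt ?_
        have := hDdeg i (by simp only [Finset.mem_range] at hi; omega)
        simp only [Finset.mem_range, not_lt] at hjD
        omega
      rw [hc, zero_mul]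
  rw [Finset.sum_congr rfl h1] at h0
  rw [← h0]
  calc ∑ t ∈ Finset.range (s + D), (Qpoly p s D t).eval ((b:K)) * g (b + t)
      = ∑ t ∈ Finset.range (s + D), ∑ i ∈ Finset.range (s+1),
          (if i ≤ t ∧ t ≤ i + (D-1) then
            ((p i).coeff (i + (D-1) - t) *
              ∏ l ∈ Finset.range i, ((b:K) + ((t - i + 1 + l : ℕ) : K))) * g (b + t)
          else 0) := by
        refine Finset.sum_congr rfl fun t _ => ?_
        rw [Qpoly_eval, Finset.sum_mul]
        refine Finset.sum_congr rfl fun i _ => ?_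
        rw [ite_mul, zero_mul]
    _ = ∑ i ∈ Finset.range (s+1), ∑ t ∈ Finset.range (s + D),
          (if i ≤ t ∧ t ≤ i + (D-1) then
            ((p i).coeff (i + (D-1) - t) *
              ∏ l ∈ Finset.range i, ((b:K) + ((t - i + 1 + l : ℕ) : K))) * g (b + t)
          else 0) := Finset.sum_comm
    _ = ∑ i ∈ Finset.range (s+1), ∑ j ∈ Finset.range D,
          (p i).coeff j * (g (m - j + i) * ∏ l ∈ Finset.range i, ((m - j + l + 1 : ℕ) : K)) := by
        refine Finset.sum_congr rfl fun i hi => ?_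
        rw [← Finset.sum_filter]
        refine Finset.sum_nbij' (fun t => i + (D-1) - t) (fun j => i + (D-1) - j)
          ?_ ?_ ?_ ?_ ?_
        · intro t ht
          simp only [Finset.mem_filter, Finset.mem_range] at ht ⊢
          omega
        · intro j hj
          simp only [Finset.mem_range] at hj
          simp only [Finset.mem_range] at hi
          simp only [Finset.mem_filter, Finset.mem_range]
          omega
        · intro t ht
          simp only [Finset.mem_filter, Finset.mem_range] at ht
          omega
        · intro j hj
          simp only [Finset.mem_range] at hj
          omega
        · intro t ht
          simp only [Finset.mem_filter, Finset.mem_range] at ht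
          obtain ⟨htr, hit, hti⟩ := ht
          have e1 : m - (i + (D-1) - t) + i = b + t := by omega
          rw [e1]
          have e3 : ∀ l ∈ Finset.range i, ((m - (i + (D-1) - t) + l + 1 : ℕ) : K)
              = ((b + (t - i + 1 + l) : ℕ) : K) := by
            intro l _
            congr 1
            omega
          rw [Finset.prod_congr rfl e3]
          push_cast
          ring
end

section
variable {K : Type*} [Field K] [CharZero K]

lemma part1 (g : ℕ → K) (s : ℕ) (p : ℕ → Polynomial K)
    (hex : ∃ i ≤ s, p i ≠ 0)
    (heq : ∑ i ∈ Finset.range (s + 1), (p i : PowerSeries K) *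
        (⇑(PowerSeries.derivative (R := K)))^[i] (PowerSeries.mk g) = 0) :
    ∃ (R : Subalgebra ℚ K) (q : Polynomial K), R.FG ∧ q ≠ 0 ∧
      (∀ i : ℕ, q.coeff i ∈ R) ∧
      (∀ k : ℕ, 1 ≤ k → q.eval (k : K) ≠ 0) ∧
      (∀ n : ℕ, g n ∈
        Subring.closure ((R : Set K) ∪ {y : K | ∃ k : ℕ, 1 ≤ k ∧ y = (q.eval (k : K))⁻¹})) := by
  classical
  set D : ℕ := ((Finset.range (s+1)).sup fun i => (p i).natDegree) + 1 with hDdef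
  have hD : 1 ≤ D := by omega
  have hDdeg : ∀ i, i ≤ s → (p i).natDegree < D := by
    intro i hi
    have hmem : i ∈ Finset.range (s+1) := Finset.mem_range.2 (Nat.lt_succ_of_le hi)
    have := Finset.le_sup (f := fun i => (p i).natDegree) hmem
    exact Nat.lt_succ_of_le this
  have hrec := key_recurrence g s p D hD hDdeg heq
  set pairs : Finset (ℕ × ℕ) :=
    (Finset.range (s+1) ×ˢ Finset.range D).filter (fun ij => (p ij.1).coeff ij.2 ≠ 0) with hpairs
  have hne : pairs.Nonempty := by
    obtain ⟨i, his, hpi⟩ := hex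
    have h1 : i < s + 1 := Nat.lt_succ_of_le his
    have h2 : (p i).natDegree < D := hDdeg i his
    refine ⟨(i, (p i).natDegree), ?_⟩
    rw [hpairs]
    exact Finset.mem_filter.2
      ⟨Finset.mem_product.2 ⟨Finset.mem_range.2 h1,
        Finset.mem_range.2 h2⟩, Polynomial.leadingCoeff_ne_zero.2 hpi⟩
  set tmax : ℕ := pairs.sup (fun ij => ij.1 + (D-1) - ij.2) with htmaxdef
  obtain ⟨ij0, hij0mem, hij0⟩ := Finset.exists_mem_eq_sup pairs hne (fun ij => ij.1 + (D-1) - ij.2)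
  rw [hpairs] at hij0mem
  have hij0mem' := Finset.mem_filter.1 hij0mem
  have hi0 : ij0.1 < s + 1 := Finset.mem_range.1 (Finset.mem_product.1 hij0mem'.1).1
  have hj0 : ij0.2 < D := Finset.mem_range.1 (Finset.mem_product.1 hij0mem'.1).2
  have hc0 : (p ij0.1).coeff ij0.2 ≠ 0 := hij0mem'.2
  have hij0' : tmax = ij0.1 + (D-1) - ij0.2 := hij0
  have htmax_le : ∀ i j, i ≤ s → j < D → (p i).coeff j ≠ 0 → i + (D-1) - j ≤ tmax := by
    intro i j hi hj hc
    have h1 : i < s + 1 := by omega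
    have hmem : (i, j) ∈ pairs := by
      rw [hpairs]
      exact Finset.mem_filter.2
        ⟨Finset.mem_product.2 ⟨Finset.mem_range.2 h1, Finset.mem_range.2 hj⟩, hc⟩
    exact Finset.le_sup (f := fun ij : ℕ × ℕ => ij.1 + (D-1) - ij.2) hmem
  have htmax_lt : tmax < s + D := by omega
  set iset : Finset ℕ := (Finset.range (s+1)).filter
    (fun i => (i ≤ tmax ∧ tmax ≤ i + (D-1)) ∧ (p i).coeff (i + (D-1) - tmax) ≠ 0) with hisetdef
  have hiset_ne : iset.Nonempty := by
    refine ⟨ij0.1, ?_⟩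
    rw [hisetdef]
    refine Finset.mem_filter.2 ⟨Finset.mem_range.2 hi0, ⟨by omega, by omega⟩, ?_⟩
    have e : ij0.1 + (D-1) - tmax = ij0.2 := by omega
    rw [e]
    exact hc0
  set imax : ℕ := iset.max' hiset_ne with himaxdef
  have hmm : imax ∈ (Finset.range (s+1)).filter
      (fun i => (i ≤ tmax ∧ tmax ≤ i + (D-1)) ∧ (p i).coeff (i + (D-1) - tmax) ≠ 0) :=
    iset.max'_mem hiset_ne
  have himax_mem := Finset.mem_filter.1 hmm
  have himax_le : ∀ i ∈ iset, i ≤ imax := fun i hi => iset.le_max' i hi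
  have himax_lt : imax < s + 1 := Finset.mem_range.1 himax_mem.1
  have himax_cond : imax ≤ tmax ∧ tmax ≤ imax + (D-1) := himax_mem.2.1
  have himax_ne : (p imax).coeff (imax + (D-1) - tmax) ≠ 0 := himax_mem.2.2
  have hQcoeff : (Qpoly p s D tmax).coeff imax = (p imax).coeff (imax + (D-1) - tmax) := by
    rw [Qpoly, Polynomial.finset_sum_coeff]
    rw [Finset.sum_eq_single imax]
    · rw [if_pos himax_cond]
      have hM : (∏ l ∈ Finset.range imax,
          (Polynomial.X + Polynomial.C ((tmax - imax + 1 + l : ℕ) : K))).Monic :=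
        Polynomial.monic_prod_of_monic _ _ fun l _ => Polynomial.monic_X_add_C _
      have hMdeg : (∏ l ∈ Finset.range imax,
          (Polynomial.X + Polynomial.C ((tmax - imax + 1 + l : ℕ) : K))).natDegree = imax := by
        rw [Polynomial.natDegree_prod_of_monic _ _ fun l _ => Polynomial.monic_X_add_C _]
        simp only [Polynomial.natDegree_X_add_C, Finset.sum_const, Finset.card_range,
          smul_eq_mul, mul_one]
      rw [Polynomial.coeff_C_mul]
      have h1 : (∏ l ∈ Finset.range imax,
          (Polynomial.X + Polynomial.C ((tmax - imax + 1 + l : ℕ) : K))).coeff imax = 1 :=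
        by have h2 := hM.coeff_natDegree; rw [hMdeg] at h2; exact h2
      rw [h1, mul_one]
    · intro i hi hine
      split
      · next hcond =>
        rcases lt_or_gt_of_ne hine with hlt | hgt
        · refine Polynomial.coeff_eq_zero_of_natDegree_lt ?_
          have h1 := Polynomial.natDegree_mul_le (p := Polynomial.C ((p i).coeff (i + (D-1) - tmax)))
            (q := ∏ l ∈ Finset.range i, (Polynomial.X + Polynomial.C ((tmax - i + 1 + l : ℕ) : K)))
          have h2 : (∏ l ∈ Finset.range i,
              (Polynomial.X + Polynomial.C ((tmax - i + 1 + l : ℕ) : K))).natDegree = i := by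
            rw [Polynomial.natDegree_prod_of_monic _ _ fun l _ => Polynomial.monic_X_add_C _]
            simp only [Polynomial.natDegree_X_add_C, Finset.sum_const, Finset.card_range,
              smul_eq_mul, mul_one]
          have h3 : (Polynomial.C ((p i).coeff (i + (D-1) - tmax))).natDegree = 0 :=
            Polynomial.natDegree_C _
          omega
        · have hz : (p i).coeff (i + (D-1) - tmax) = 0 := by
            by_contra hcz
            have hmem : i ∈ iset := by
              rw [hisetdef]
              exact Finset.mem_filter.2 ⟨hi, hcond, hcz⟩
            have := himax_le i hmem
            omega
          rw [hz, map_zero, zero_mul, Polynomial.coeff_zero]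
      · exact Polynomial.coeff_zero _
    · intro h
      exact absurd (Finset.mem_range.2 (by omega : imax < s + 1)) h
  have hQne : Qpoly p s D tmax ≠ 0 := by
    intro h
    rw [h, Polynomial.coeff_zero] at hQcoeff
    exact himax_ne hQcoeff.symm
  have hQtgt0 : ∀ t, tmax < t → ∀ x : K, (Qpoly p s D t).eval x = 0 := by
    intro t ht x
    rw [Qpoly_eval]
    refine Finset.sum_eq_zero fun i hi => ?_
    split
    · next hcond =>
      have hz : (p i).coeff (i + (D-1) - t) = 0 := by
        by_contra hcz
        have := htmax_le i (i + (D-1) - t) (by simp only [Finset.mem_range] at hi; omega)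
          (by omega) hcz
        omega
      rw [hz, zero_mul]
    · rfl
  have hnatfin : {b : ℕ | (Qpoly p s D tmax).eval ((b:K)) = 0}.Finite := by
    have hfr := Polynomial.finite_setOf_isRoot hQne
    have he : {b : ℕ | (Qpoly p s D tmax).eval ((b:K)) = 0} =
        (fun b : ℕ => (b : K)) ⁻¹' {x : K | (Qpoly p s D tmax).IsRoot x} := rfl
    rw [he]
    exact hfr.preimage (Set.injOn_of_injective Nat.cast_injective)
  obtain ⟨N, hN⟩ := hnatfin.bddAbove
  have hQev_ne : ∀ b : ℕ, N < b → (Qpoly p s D tmax).eval ((b:K)) ≠ 0 := by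
    intro b hb h
    have : b ≤ N := hN h
    omega
  set q : Polynomial K := Polynomial.taylor (((N+1 : ℕ)) : K) (Qpoly p s D tmax) with hqdef
  have hqne : q ≠ 0 := by
    intro h
    apply hQne
    apply Polynomial.taylor_injective (((N+1 : ℕ)) : K)
    rw [← hqdef, h, map_zero]
  have hqeval : ∀ k : ℕ, 1 ≤ k → q.eval ((k:K)) ≠ 0 := by
    intro k hk
    rw [hqdef, Polynomial.taylor_eval]
    have e : (k : K) + ((N+1 : ℕ) : K) = ((k + (N+1) : ℕ) : K) := by push_cast; ring
    rw [e]
    exact hQev_ne _ (by omega)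
  set n₀ : ℕ := tmax + N + 2 with hn₀def
  set gens : Finset K :=
    (((Finset.range (s+1)) ×ˢ (Finset.range D)).image fun ij => (p ij.1).coeff ij.2) ∪
    ((Finset.range (q.natDegree + 1)).image q.coeff) ∪
    ((Finset.range n₀).image g) with hgensdef
  set R : Subalgebra ℚ K := Algebra.adjoin ℚ (gens : Set K) with hRdef
  have hRfg : R.FG := Subalgebra.fg_adjoin_finset gens
  have hgen_mem : ∀ x ∈ gens, x ∈ R := fun x hx => Algebra.subset_adjoin (by exact_mod_cast hx)
  have hqcoeff : ∀ i, q.coeff i ∈ R := by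
    intro i
    rcases le_or_gt i q.natDegree with hle | hlt
    · refine hgen_mem _ ?_
      refine Finset.mem_union_left _ (Finset.mem_union_right _ ?_)
      exact Finset.mem_image.2 ⟨i, Finset.mem_range.2 (by omega), rfl⟩
    · rw [Polynomial.coeff_eq_zero_of_natDegree_lt hlt]
      exact zero_mem R
  have hpcoeff : ∀ i j, i ≤ s → j < D → (p i).coeff j ∈ R := by
    intro i j hi hj
    refine hgen_mem _ ?_
    refine Finset.mem_union_left _ (Finset.mem_union_left _ ?_)
    exact Finset.mem_image.2 ⟨(i, j), Finset.mem_product.2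
      ⟨Finset.mem_range.2 (by omega), Finset.mem_range.2 hj⟩, rfl⟩
  have hgRmem : ∀ n, n < n₀ → g n ∈ R := by
    intro n hn
    refine hgen_mem _ ?_
    exact Finset.mem_union_right _ (Finset.mem_image.2 ⟨n, Finset.mem_range.2 hn, rfl⟩)
  have hQevalmem : ∀ t b : ℕ, (Qpoly p s D t).eval ((b:K)) ∈ R := by
    intro t b
    rw [Qpoly_eval]
    refine Subalgebra.sum_mem R fun i hi => ?_
    split
    · next hcond =>
      refine mul_mem (hpcoeff i _ (by simp only [Finset.mem_range] at hi; omega) (by omega))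
        (Subalgebra.prod_mem R fun l _ => ?_)
      have e : (b : K) + ((t - i + 1 + l : ℕ) : K) = ((b + (t - i + 1 + l) : ℕ) : K) := by
        push_cast; ring
      rw [e]
      exact Subalgebra.natCast_mem R _
    · exact zero_mem R
  set S : Set K := (R : Set K) ∪ {y : K | ∃ k : ℕ, 1 ≤ k ∧ y = (q.eval (k : K))⁻¹} with hSdef
  have hclR : ∀ x ∈ R, x ∈ Subring.closure S := fun x hx =>
    Subring.subset_closure (Or.inl hx)
  have hmain : ∀ n, g n ∈ Subring.closure S := by
    intro n
    induction n using Nat.strong_induction_on with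
    | _ n IH =>
    by_cases hn : n < n₀
    · exact hclR _ (hgRmem n hn)
    · push_neg at hn
      set b : ℕ := n - tmax with hbdef
      have hbn : b + tmax = n := by omega
      have hrecb := hrec b
      have htmem : tmax ∈ Finset.range (s + D) := Finset.mem_range.2 htmax_lt
      rw [← Finset.sum_erase_add _ _ htmem, hbn] at hrecb
      have hQb : (Qpoly p s D tmax).eval ((b:K)) ≠ 0 := hQev_ne b (by omega)
      have h2 : (Qpoly p s D tmax).eval ((b:K)) * g n =
          - ∑ t ∈ (Finset.range (s+D)).erase tmax, (Qpoly p s D t).eval ((b:K)) * g (b+t) := by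
        linear_combination hrecb
      have hginv : g n = ((Qpoly p s D tmax).eval ((b:K)))⁻¹ *
          ((Qpoly p s D tmax).eval ((b:K)) * g n) := by
        rw [inv_mul_cancel_left₀ hQb]
      rw [hginv]
      refine mul_mem ?_ ?_
      · apply Subring.subset_closure
        right
        refine ⟨b - (N+1), by omega, ?_⟩
        rw [hqdef, Polynomial.taylor_eval]
        have e : ((b - (N+1) : ℕ) : K) + ((N+1 : ℕ) : K) = ((b : ℕ) : K) := by
          rw [← Nat.cast_add]
          congr 1
          omega
        rw [e]
      · rw [h2]
        refine neg_mem (Subring.sum_mem _ fun t ht => ?_)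
        simp only [Finset.mem_erase, Finset.mem_range] at ht
        rcases lt_or_gt_of_ne ht.1 with hlt | hgt
        · exact mul_mem (hclR _ (hQevalmem t b)) (IH (b+t) (by omega))
        · rw [hQtgt0 t hgt, zero_mul]
          exact zero_mem _
  exact ⟨R, q, hRfg, hqne, hqcoeff, hqeval, hmain⟩
end

lemma hasseDeriv_map' {R S : Type*} [CommSemiring R] [CommSemiring S] (f : R →+* S)
    (k : ℕ) (p : Polynomial R) :
    Polynomial.hasseDeriv k (p.map f) = (Polynomial.hasseDeriv k p).map f := by
  ext n
  simp only [Polynomial.hasseDeriv_coeff, Polynomial.coeff_map]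
  rw [map_mul, map_natCast]

lemma coeff_pow_mem {K : Type*} [Field K] [CharZero K] (T : Subalgebra ℚ K) (ψ : PowerSeries K) :
    ∀ (k e : ℕ), (∀ m ≤ e, PowerSeries.coeff m ψ ∈ T) →
      PowerSeries.coeff e (ψ ^ k) ∈ T := by
  intro k
  induction k with
  | zero =>
    intro e _
    rw [pow_zero, PowerSeries.coeff_one]
    split
    · exact one_mem T
    · exact zero_mem T
  | succ k IH =>
    intro e h
    rw [pow_succ, PowerSeries.coeff_mul]
    refine Subalgebra.sum_mem T fun ab hab => ?_
    have hsum := Finset.HasAntidiagonal.mem_antidiagonal.1 hab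
    exact mul_mem (IH ab.1 fun m hm => h m (by omega)) (h ab.2 (by omega))

section
variable {K : Type*} [Field K] [CharZero K]

lemma part2 (g : ℕ → K) (r : ℕ) (P : ℕ → Polynomial K)
    (hex : ∃ i ≤ r, P i ≠ 0)
    (heq : ∑ i ∈ Finset.range (r + 1),
      (P i : PowerSeries K) * (PowerSeries.mk g) ^ i = 0) :
    ∃ T : Subalgebra ℚ K, T.FG ∧ ∀ n : ℕ, g n ∈ T := by
  classical
  set φ : Polynomial K →+* PowerSeries K := Polynomial.coeToPowerSeries.ringHom with hφ
  have hφapp : ∀ x : Polynomial K, φ x = (x : PowerSeries K) := fun x => rfl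
  have hφinj : Function.Injective φ := fun a b h => Polynomial.coe_inj.1 h
  set G : PowerSeries K := PowerSeries.mk g with hG
  set pred : ℕ → Prop := fun d => ∃ B : Polynomial (Polynomial K), B ≠ 0 ∧ B.natDegree ≤ d ∧
    Polynomial.eval G (B.map φ) = 0 with hpreddef
  have hpred_r : pred r := by
    refine ⟨∑ i ∈ Finset.range (r+1), Polynomial.C (P i) * Polynomial.X ^ i, ?_, ?_, ?_⟩
    · obtain ⟨i, hir, hPi⟩ := hex
      intro hcon
      apply hPi
      have := congrArg (fun B => Polynomial.coeff B i) hcon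
      simp only [Polynomial.finset_sum_coeff, Polynomial.coeff_zero] at this
      rw [Finset.sum_eq_single i] at this
      · rwa [Polynomial.coeff_C_mul, Polynomial.coeff_X_pow, if_pos rfl, mul_one] at this
      · intro j hj hjne
        rw [Polynomial.coeff_C_mul, Polynomial.coeff_X_pow, if_neg (Ne.symm hjne), mul_zero]
      · intro h
        exact absurd (Finset.mem_range.2 (by omega)) h
    · refine Polynomial.natDegree_sum_le_of_forall_le _ _ fun i hi => ?_
      exact le_trans (Polynomial.natDegree_C_mul_X_pow_le _ _) (by
        simp only [Finset.mem_range] at hi; omega)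
    · rw [Polynomial.map_sum]
      rw [Polynomial.eval_finset_sum]
      rw [← heq]
      refine Finset.sum_congr rfl fun i _ => ?_
      rw [Polynomial.map_mul, Polynomial.map_C, Polynomial.map_pow, Polynomial.map_X,
        Polynomial.eval_mul, Polynomial.eval_C, Polynomial.eval_pow, Polynomial.eval_X]
      rfl
  have hex_pred : ∃ d, pred d := ⟨r, hpred_r⟩
  set d : ℕ := Nat.find hex_pred with hd
  obtain ⟨B, hB0, hBdeg, hBeval⟩ : pred d := Nat.find_spec hex_pred
  have hdmin : ∀ d' : ℕ, d' < d → ¬ pred d' := fun d' hd' => Nat.find_min hex_pred hd'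
  have hBdeg_eq : B.natDegree = d := by
    rcases lt_or_eq_of_le hBdeg with h | h
    · exact absurd ⟨B, hB0, le_refl _, hBeval⟩ (hdmin _ h)
    · exact h
  have hd1 : 1 ≤ d := by
    by_contra h
    have hd0 : d = 0 := by omega
    rw [hd0] at hBdeg_eq
    have hBC : B = Polynomial.C (B.coeff 0) := Polynomial.eq_C_of_natDegree_eq_zero hBdeg_eq
    rw [hBC, Polynomial.map_C, Polynomial.eval_C] at hBeval
    rw [hφapp, Polynomial.coe_eq_zero_iff] at hBeval
    rw [hBC, hBeval, map_zero] at hB0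
    exact hB0 rfl
  set Bm : Polynomial (PowerSeries K) := B.map φ with hBm
  have hBmdeg : Bm.natDegree = d := by
    rw [hBm, Polynomial.natDegree_map_eq_of_injective hφinj, hBdeg_eq]
  -- the separant is nonzero
  set H : PowerSeries K := Polynomial.eval G (Polynomial.derivative Bm) with hH
  have hHne : H ≠ 0 := by
    intro h
    refine hdmin (d-1) (by omega) ⟨Polynomial.derivative B, ?_, ?_, ?_⟩
    · intro hder
      have := Polynomial.natDegree_eq_zero_of_derivative_eq_zero hder
      omega
    · have := Polynomial.natDegree_derivative_le B
      omega
    · rw [← h, hH, hBm, Polynomial.derivative_map]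
  -- order of the separant
  have hexcoeff : ∃ v, PowerSeries.coeff v H ≠ 0 := by
    by_contra h
    push_neg at h
    exact hHne (PowerSeries.ext h)
  set v : ℕ := Nat.find hexcoeff with hv
  have hvne : PowerSeries.coeff v H ≠ 0 := Nat.find_spec hexcoeff
  have hvmin : ∀ w, w < v → PowerSeries.coeff w H = 0 := by
    intro w hw
    by_contra h
    have hle : v ≤ w := Nat.find_le h
    omega
  set s : ℕ := v + 1 with hs
  set G₀ : Polynomial K := PowerSeries.trunc s G with hG₀
  set G₁ : PowerSeries K := PowerSeries.mk (fun n => g (n + s)) with hG₁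
  have hsplit : G = (G₀ : PowerSeries K) + PowerSeries.X ^ s * G₁ := by
    ext n
    rw [map_add, Polynomial.coeff_coe, PowerSeries.coeff_trunc,
      PowerSeries.coeff_X_pow_mul']
    rcases lt_or_ge n s with h | h
    · rw [if_pos h, if_neg (by omega)]
      simp [hG]
    · rw [if_neg (by omega), if_pos h]
      simp only [hG, hG₁, PowerSeries.coeff_mk]
      rw [zero_add]
      congr 1
      omega
  -- Taylor expansion
  have htay : ∑ k ∈ Finset.range (d + 1),
      Polynomial.coeff (Polynomial.taylor ((G₀ : PowerSeries K)) Bm) k *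
        (PowerSeries.X ^ s * G₁) ^ k = 0 := by
    have e1 : Polynomial.eval (PowerSeries.X ^ s * G₁ + (G₀ : PowerSeries K)) Bm = 0 := by
      rw [← hBeval]
      congr 1
      rw [hsplit]
      ring
    rw [← Polynomial.taylor_eval] at e1
    rw [Polynomial.eval_eq_sum_range] at e1
    rw [Polynomial.natDegree_taylor, hBmdeg] at e1
    exact e1
  set q : ℕ → Polynomial K := fun k => Polynomial.eval G₀ (Polynomial.hasseDeriv k B) with hq
  have hcq : ∀ k, Polynomial.coeff (Polynomial.taylor ((G₀ : PowerSeries K)) Bm) k =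
      ((q k : Polynomial K) : PowerSeries K) := by
    intro k
    rw [Polynomial.taylor_coeff, hBm, hasseDeriv_map', Polynomial.eval_map,
      ← hφapp G₀, Polynomial.eval₂_hom, hφapp]
  rw [Finset.sum_congr rfl (fun k _ => by rw [hcq k])] at htay
  -- relation between q 1 and H
  have hq1 : ∀ w, w ≤ v → (q 1).coeff w = PowerSeries.coeff w H := by
    intro w hw
    have hdvd : (PowerSeries.X : PowerSeries K) ^ s ∣
        (H - ((q 1 : Polynomial K) : PowerSeries K)) := by
      have h1 : ((q 1 : Polynomial K) : PowerSeries K) =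
          Polynomial.eval ((G₀ : PowerSeries K)) (Polynomial.derivative Bm) := by
        rw [← Polynomial.hasseDeriv_one, ← Polynomial.taylor_coeff, hcq]
      rw [h1, hH]
      have h2 : G - (G₀ : PowerSeries K) ∣ _ :=
        Polynomial.sub_dvd_eval_sub G ((G₀ : PowerSeries K)) (Polynomial.derivative Bm)
      refine dvd_trans ?_ h2
      refine Dvd.intro G₁ ?_
      rw [hsplit]
      ring
    rw [PowerSeries.X_pow_dvd_iff] at hdvd
    have := hdvd w (by omega)
    rw [map_sub, Polynomial.coeff_coe, sub_eq_zero] at this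
    exact this.symm
  set u : K := (q 1).coeff v with hu
  have hune : u ≠ 0 := by
    rw [hu, hq1 v (le_refl v)]
    exact hvne
  -- the finitely generated algebra
  set J : ℕ := ((Finset.range (d+1)).sup fun k => (q k).natDegree) + 1 with hJ
  set gens : Finset K :=
    ((Finset.range (d+1) ×ˢ Finset.range J).image fun kj => (q kj.1).coeff kj.2) ∪
    ((Finset.range s).image g) ∪ {u⁻¹} with hgens
  set T : Subalgebra ℚ K := Algebra.adjoin ℚ (gens : Set K) with hT
  have hTfg : T.FG := Subalgebra.fg_adjoin_finset gens
  have hgenT : ∀ x ∈ gens, x ∈ T := fun x hx => Algebra.subset_adjoin (by exact_mod_cast hx)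
  have hqT : ∀ k, k ≤ d → ∀ j, (q k).coeff j ∈ T := by
    intro k hk j
    rcases lt_or_ge j J with h | h
    · refine hgenT _ ?_
      refine Finset.mem_union_left _ (Finset.mem_union_left _ ?_)
      exact Finset.mem_image.2 ⟨(k, j), Finset.mem_product.2
        ⟨Finset.mem_range.2 (by omega), Finset.mem_range.2 h⟩, rfl⟩
    · rw [Polynomial.coeff_eq_zero_of_natDegree_lt]
      · exact zero_mem T
      · have : (q k).natDegree ≤ (Finset.range (d+1)).sup fun k => (q k).natDegree :=
          Finset.le_sup (f := fun k => (q k).natDegree) (Finset.mem_range.2 (by omega))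
        omega
  have hgT : ∀ n, n < s → g n ∈ T := by
    intro n hn
    refine hgenT _ ?_
    refine Finset.mem_union_left _ (Finset.mem_union_right _ ?_)
    exact Finset.mem_image.2 ⟨n, Finset.mem_range.2 hn, rfl⟩
  have huinvT : u⁻¹ ∈ T := hgenT _ (Finset.mem_union_right _ (Finset.mem_singleton_self _))
  -- coefficient of X^s * G₁
  have hcoeffXsG₁ : ∀ b : ℕ, PowerSeries.coeff b (PowerSeries.X ^ s * G₁) =
      if s ≤ b then g b else 0 := by
    intro b
    rw [PowerSeries.coeff_X_pow_mul']
    split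
    · rw [hG₁, PowerSeries.coeff_mk]
      congr 1
      omega
    · rfl
  -- main induction
  have hmain : ∀ n, g (n + s) ∈ T := by
    intro n
    induction n using Nat.strong_induction_on with
    | _ n IH =>
    have h0 : PowerSeries.coeff (n + v + s) (∑ k ∈ Finset.range (d + 1),
        ((q k : Polynomial K) : PowerSeries K) * (PowerSeries.X ^ s * G₁) ^ k) = 0 := by
      rw [htay, map_zero]
    rw [map_sum] at h0
    have h1mem : (1 : ℕ) ∈ Finset.range (d+1) := Finset.mem_range.2 (by omega)
    rw [← Finset.sum_erase_add _ _ h1mem] at h0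
    -- the k = 1 term
    have hvpair : ((v, n + s) : ℕ × ℕ) ∈ Finset.HasAntidiagonal.antidiagonal (n + v + s) :=
      Finset.HasAntidiagonal.mem_antidiagonal.2 (by omega)
    have hk1 : PowerSeries.coeff (n + v + s)
        (((q 1 : Polynomial K) : PowerSeries K) * (PowerSeries.X ^ s * G₁) ^ 1) =
        u * g (n + s) +
        ∑ ab ∈ (Finset.HasAntidiagonal.antidiagonal (n + v + s)).erase (v, n + s),
          (q 1).coeff ab.1 * (if s ≤ ab.2 then g ab.2 else 0) := by
      rw [pow_one, PowerSeries.coeff_mul]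
      rw [← Finset.add_sum_erase _ _ hvpair]
      congr 1
      · rw [Polynomial.coeff_coe, hcoeffXsG₁, if_pos (by omega : s ≤ n + s)]
      · refine Finset.sum_congr rfl fun ab hab => ?_
        rw [Polynomial.coeff_coe, hcoeffXsG₁]
    have hrestT : ∑ ab ∈ (Finset.HasAntidiagonal.antidiagonal (n + v + s)).erase (v, n + s),
        (q 1).coeff ab.1 * (if s ≤ ab.2 then g ab.2 else 0) ∈ T := by
      refine Subalgebra.sum_mem T fun ab hab => ?_
      have habm := Finset.HasAntidiagonal.mem_antidiagonal.1 (Finset.mem_of_mem_erase hab)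
      have habne := Finset.ne_of_mem_erase hab
      rcases lt_trichotomy ab.1 v with h | h | h
      · rw [show (q 1).coeff ab.1 = 0 by rw [hq1 ab.1 (by omega)]; exact hvmin ab.1 h, zero_mul]
        exact zero_mem T
      · exfalso
        apply habne
        have : ab.2 = n + s := by omega
        rw [← this, ← h]
      · refine mul_mem (hqT 1 (by omega) ab.1) ?_
        split
        · next hsab =>
          have : ab.2 = (ab.2 - s) + s := by omega
          rw [this]
          exact IH (ab.2 - s) (by omega)
        · exact zero_mem T
    -- the other terms
    have hothersT : ∑ k ∈ (Finset.range (d+1)).erase 1,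
        PowerSeries.coeff (n + v + s)
          (((q k : Polynomial K) : PowerSeries K) * (PowerSeries.X ^ s * G₁) ^ k) ∈ T := by
      refine Subalgebra.sum_mem T fun k hk => ?_
      have hkmem := Finset.mem_of_mem_erase hk
      have hkne := Finset.ne_of_mem_erase hk
      have hkd : k ≤ d := by
        have := Finset.mem_range.1 hkmem
        omega
      rcases Nat.eq_zero_or_pos k with hk0 | hkpos
      · rw [hk0, pow_zero, mul_one, Polynomial.coeff_coe]
        exact hqT 0 (by omega) _
      · have hk2 : 2 ≤ k := by omega
        rw [mul_pow, ← pow_mul, PowerSeries.coeff_mul]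
        refine Subalgebra.sum_mem T fun ab hab => ?_
        have habm := Finset.HasAntidiagonal.mem_antidiagonal.1 hab
        rw [Polynomial.coeff_coe, PowerSeries.coeff_X_pow_mul']
        refine mul_mem (hqT k hkd ab.1) ?_
        split
        · next hskb =>
          have hsk : 2 * s ≤ s * k := by nlinarith
          refine coeff_pow_mem T G₁ k (ab.2 - s * k) fun m hm => ?_
          rw [hG₁, PowerSeries.coeff_mk]
          exact IH m (by omega)
        · exact zero_mem T
    -- conclude
    have hugn : u * g (n + s) ∈ T := by
      have : u * g (n + s) = -(∑ k ∈ (Finset.range (d+1)).erase 1,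
          PowerSeries.coeff (n + v + s)
            (((q k : Polynomial K) : PowerSeries K) * (PowerSeries.X ^ s * G₁) ^ k)) -
          (∑ ab ∈ (Finset.HasAntidiagonal.antidiagonal (n + v + s)).erase (v, n + s),
            (q 1).coeff ab.1 * (if s ≤ ab.2 then g ab.2 else 0)) := by
        rw [hk1] at h0
        linear_combination h0
      rw [this]
      exact sub_mem (neg_mem hothersT) hrestT
    have : g (n + s) = u⁻¹ * (u * g (n + s)) := by
      rw [← mul_assoc, inv_mul_cancel₀ hune, one_mul]
    rw [this]
    exact mul_mem huinvT hugn
  refine ⟨T, hTfg, fun n => ?_⟩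
  rcases lt_or_ge n s with h | h
  · exact hgT n h
  · have : n = (n - s) + s := by omega
    rw [this]
    exact hmain (n - s)
end


/-- Lefschetz-style reduction: Let `K` be a field of characteristic 0 and
`F(z) = ∑_{n≥1} f(n) zⁿ ∈ K[[z]]` be D-finite over `K(z)`. Then there are a finitely
generated `ℚ`-subalgebra `R` of `K` and a nonzero polynomial `p` with coefficients in `R`
and `p(1), p(2), … ≠ 0` such that each `f(n)` (for `n ≥ 1`) lies in the subring of `K`
generated by `R` together with the inverses `p(k)⁻¹` for `k ≥ 1`. Moreover, if `F` is
algebraic over `K(z)`, then there is a finitely generated `ℚ`-subalgebra `T` of `K`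
containing every `f(n)` for `n ≥ 1`. -/
theorem dfinite_coefficients_in_localization
    (K : Type*) [Field K] [CharZero K] (f : ℕ → K)
    (hDF : ∃ (s : ℕ) (p : ℕ → Polynomial K), (∃ i ≤ s, p i ≠ 0) ∧
      ∑ i ∈ Finset.range (s + 1),
        (p i : PowerSeries K) *
          (⇑(PowerSeries.derivative (R := K)))^[i]
            (PowerSeries.mk fun n => if n = 0 then 0 else f n) = 0) :
    (∃ (R : Subalgebra ℚ K) (p : Polynomial K), R.FG ∧ p ≠ 0 ∧
      (∀ i : ℕ, p.coeff i ∈ R) ∧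
      (∀ k : ℕ, 1 ≤ k → p.eval (k : K) ≠ 0) ∧
      (∀ n : ℕ, 1 ≤ n → f n ∈
        Subring.closure ((R : Set K) ∪ {y : K | ∃ k : ℕ, 1 ≤ k ∧ y = (p.eval (k : K))⁻¹}))) ∧
    ((∃ (r : ℕ) (P : ℕ → Polynomial K), (∃ i ≤ r, P i ≠ 0) ∧
        ∑ i ∈ Finset.range (r + 1),
          (P i : PowerSeries K) *
            (PowerSeries.mk fun n => if n = 0 then 0 else f n) ^ i = 0) →
      ∃ T : Subalgebra ℚ K, T.FG ∧ ∀ n : ℕ, 1 ≤ n → f n ∈ T) := by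
  set g : ℕ → K := fun n => if n = 0 then 0 else f n with hg
  have hgf : ∀ n : ℕ, 1 ≤ n → g n = f n := by
    intro n hn
    simp only [hg]
    rw [if_neg (by omega)]
  constructor
  · obtain ⟨s, p, hex, heq⟩ := hDF
    obtain ⟨R, q, hRfg, hqne, hqcoeff, hqeval, hmem⟩ := part1 g s p hex heq
    refine ⟨R, q, hRfg, hqne, hqcoeff, hqeval, fun n hn => ?_⟩
    rw [← hgf n hn]
    exact hmem n
  · rintro ⟨r, P, hex2, heq2⟩
    obtain ⟨T, hTfg, hT⟩ := part2 g r P hex2 heq2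
    refine ⟨T, hTfg, fun n hn => ?_⟩
    rw [← hgf n hn]
    exact hT n
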